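/- Let N ≥ 3 and let φ ∈ C_c^∞(ℝ^N) satisfy φ ≥ 0, supp φ ⊂ (0,2π)^N, and φ = 1 on some nonempty open set Ω' ⊂ (0,2π)^N. Then there exists c > 0 such that for every integer n ≥ 1, ∫_{ℝ^N} x_N^{N−2} (∏_{i=1}^{N−1} sin(n xᵢ))^{2(N−1)} (Σ_{j=1}^{N−1} cos²(n x_j)) φ(x) dx ≥ c. -/

import Mathlib

open MeasureTheory Real Filter

noncomputable section

abbrev Eu (N : ℕ) : Type := EuclideanSpace ℝ (Fin N)

def ebasis {N : ℕ} (i : Fin N) : Eu N := EuclideanSpace.single i 1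

/-- Partial derivative `∂ᵢ u (x)`. -/
def pd {N : ℕ} (u : Eu N → ℝ) (i : Fin N) (x : Eu N) : ℝ :=
  fderiv ℝ u x (ebasis i)

/-- Second partial derivative `∂ᵢ∂ⱼ u (x)`. -/
def pd2 {N : ℕ} (u : Eu N → ℝ) (i j : Fin N) (x : Eu N) : ℝ :=
  fderiv ℝ (fun y => fderiv ℝ u y (ebasis j)) x (ebasis i)

/-- The determinant of the Hessian matrix `det (D²u)(x)`. -/
def hessDet {N : ℕ} (u : Eu N → ℝ) (x : Eu N) : ℝ :=
  (Matrix.of fun i j => pd2 u i j x).det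

/-- The Besov norm `‖u‖_{s,p}`. -/
def besov (N : ℕ) (s p : ℝ) (u : Eu N → ℝ) : ℝ :=
  (∫ x : Eu N, |u x| ^ p) ^ (1/p)
  + (∫ x : Eu N, ‖fderiv ℝ u x‖ ^ p) ^ (1/p)
  + (∫ x : Eu N, ∫ y : Eu N,
      ‖fderiv ℝ u x - fderiv ℝ u y‖ ^ p / ‖x - y‖ ^ ((N : ℝ) + (s-1)*p)) ^ (1/p)

/-- The index of the last coordinate (`x_N`) of `ℝ^N`. -/
def lastIdx (N : ℕ) (hN : 0 < N) : Fin N := ⟨N - 1, Nat.sub_lt hN Nat.one_pos⟩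

/-- The lacunary sequence `n_ℓ = k^{N^{3ℓ}}`. -/
def nseq (N k l : ℕ) : ℕ := k ^ (N ^ (3 * l))

/-- `∏_{i=1}^{N-1} sin²(n xᵢ)`. -/
def gfun (N : ℕ) (n : ℝ) (x : Eu N) : ℝ :=
  ∏ i : Fin (N-1), (Real.sin (n * x (Fin.castLE (Nat.sub_le N 1) i)))^2

/-- The atom `f(x) = x_N ∏_{i=1}^{N-1} sin²(n xᵢ)`. -/
def ffun (N : ℕ) (hN : 0 < N) (n : ℝ) (x : Eu N) : ℝ :=
  x (lastIdx N hN) * gfun N n x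

/-- `w_k(x) = Σ_{ℓ=1}^k n_ℓ^{-(2-2/N)} ℓ^{-1/N} ∏_{i=1}^{N-1} sin²(n_ℓ xᵢ)`. -/
def wfun (N k : ℕ) (x : Eu N) : ℝ :=
  ∑ l ∈ Finset.Icc 1 k,
    ((nseq N k l : ℝ)) ^ (-(2 - 2/(N:ℝ))) * ((l : ℝ)) ^ (-(1/(N:ℝ))) * gfun N (nseq N k l) x

/-- `u_k(x) = χ(x) w_k(x) x_N`. -/
def ufun (N : ℕ) (hN : 0 < N) (k : ℕ) (χ : Eu N → ℝ) (x : Eu N) : ℝ :=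
  χ x * wfun N k x * x (lastIdx N hN)

/-- The `C²` norm: supremum of all partial derivatives of order `≤ 2`. -/
def C2norm {N : ℕ} (φ : Eu N → ℝ) : ℝ :=
  ⨆ x : Eu N, max |φ x| (max (‖iteratedFDeriv ℝ 1 φ x‖) (‖iteratedFDeriv ℝ 2 φ x‖))

/-- The `C¹` norm: supremum of all partial derivatives of order `≤ 1`. -/
def C1norm {N : ℕ} (φ : Eu N → ℝ) : ℝ :=
  ⨆ x : Eu N, max |φ x| (‖iteratedFDeriv ℝ 1 φ x‖)

/-- Glue `x̂ ∈ ℝ^{N-1}` and `t ∈ ℝ` into the point `(x̂, t) ∈ ℝ^N`. -/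
def glue (N : ℕ) (hN : 0 < N) (xh : Eu (N-1)) (t : ℝ) : Eu N :=
  WithLp.toLp 2 (fun i => if h : (i : ℕ) < N - 1 then xh ⟨i, h⟩ else t)

lemma oneD_pos {α β : ℝ} (hαβ : α < β) (g : ℝ → ℝ) (hg : Continuous g)
    (h0 : ∀ t, 0 ≤ g t) (hZ : {t : ℝ | g t = 0}.Countable) :
    0 < ∫ t in Set.Ioo α β, g t := by
  rw [setIntegral_pos_iff_support_of_nonneg_ae (ae_of_all _ h0)
    ((hg.integrableOn_Icc).mono_set Set.Ioo_subset_Icc_self)]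
  have h1 : Set.Ioo α β \ {t : ℝ | g t = 0} ⊆ Function.support g ∩ Set.Ioo α β := by
    intro t ht
    exact ⟨ht.2, ht.1⟩
  calc (0:ENNReal) < volume (Set.Ioo α β) := by simp [hαβ]
    _ = volume (Set.Ioo α β \ {t : ℝ | g t = 0}) :=
        (measure_diff_null (hZ.measure_zero _)).symm
    _ ≤ _ := measure_mono h1

lemma oneD {α β : ℝ} (hαβ : α < β) (g : ℝ → ℝ) (hg : Continuous g)
    (hper : Function.Periodic g π) (h0 : ∀ t, 0 ≤ g t)
    (hZ : {t : ℝ | g t = 0}.Countable) :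
    ∃ c : ℝ, 0 < c ∧ ∀ n : ℕ, 1 ≤ n → c ≤ ∫ t in Set.Ioo α β, g (n * t) := by
  have hint : ∀ t₁ t₂ : ℝ, IntervalIntegrable g volume t₁ t₂ :=
    fun t₁ t₂ => hg.intervalIntegrable t₁ t₂
  set J : ℝ := ∫ x in (0:ℝ)..π, g x with hJdef
  have hJ : 0 < J := by
    rw [hJdef, intervalIntegral.integral_of_le pi_pos.le,
      MeasureTheory.integral_Ioc_eq_integral_Ioo]
    exact oneD_pos pi_pos g hg h0 hZ
  set I : ℕ → ℝ := fun n => ∫ t in Set.Ioo α β, g (n * t) with hIdef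
  have hIpos : ∀ n : ℕ, 1 ≤ n → 0 < I n := by
    intro n hn
    have hn' : (n:ℝ) ≠ 0 := Nat.cast_ne_zero.2 (by omega)
    apply oneD_pos hαβ (fun t => g ((n:ℝ) * t)) (by fun_prop) (fun t => h0 _)
    have : {t : ℝ | g ((n:ℝ) * t) = 0} = (fun s : ℝ => s / (n:ℝ)) '' {t : ℝ | g t = 0} := by
      ext t
      constructor
      · intro ht; exact ⟨(n:ℝ) * t, ht, by field_simp⟩
      · rintro ⟨s, hs, rfl⟩
        simpa [mul_div_cancel₀ s hn'] using hs
    rw [this]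
    exact hZ.image _
  set c₁ : ℝ := (β - α) / (2 * π) * J with hc₁def
  have hc₁pos : 0 < c₁ := mul_pos (div_pos (by linarith) (by positivity)) hJ
  have hlarge : ∀ n : ℕ, 2 * π ≤ (n:ℝ) * (β - α) → c₁ ≤ I n := by
    intro n hn2
    have hnpos : 0 < (n:ℝ) := by
      rcases Nat.eq_zero_or_pos n with h | h
      · exfalso; rw [h] at hn2; simp at hn2; nlinarith [pi_pos]
      · exact_mod_cast h
    have hn' : (n:ℝ) ≠ 0 := hnpos.ne'
    set m : ℕ := ⌊((n:ℝ) * (β - α)) / π⌋₊ with hmdef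
    have hm1 : ((n:ℝ) * (β - α)) / (2*π) ≤ (m:ℝ) := by
      have h2 : (2:ℝ) ≤ ((n:ℝ) * (β - α)) / π := by
        rw [le_div_iff₀ pi_pos]; linarith
      have := Nat.lt_floor_add_one (((n:ℝ) * (β - α)) / π)
      have hx : ((n:ℝ) * (β - α)) / π - 1 ≤ (m:ℝ) := by
        rw [hmdef]; linarith
      have hy : ((n:ℝ)*(β-α))/(2*π) = (((n:ℝ)*(β-α))/π)/2 := by
        rw [div_div]; ring_nf
      linarith
    have hle : (n:ℝ) * α + (m:ℝ) * π ≤ (n:ℝ) * β := by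
      have : (m:ℝ) * π ≤ (n:ℝ) * (β - α) := by
        calc (m:ℝ) * π ≤ (((n:ℝ) * (β - α)) / π) * π :=
          mul_le_mul_of_nonneg_right (Nat.floor_le (div_nonneg (mul_nonneg hnpos.le (by linarith)) pi_pos.le)) pi_pos.le
        _ = (n:ℝ) * (β - α) := by field_simp
      linarith
    have key : (m:ℝ) * J ≤ ∫ x in ((n:ℝ)*α)..((n:ℝ)*β), g x := by
      have hsplit : ∫ x in ((n:ℝ)*α)..((n:ℝ)*β), g x
          = (∫ x in ((n:ℝ)*α)..((n:ℝ)*α + (m:ℤ) • π), g x)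
            + ∫ x in ((n:ℝ)*α + (m:ℤ) • π)..((n:ℝ)*β), g x := by
        rw [intervalIntegral.integral_add_adjacent_intervals (hint _ _) (hint _ _)]
      have hper' : ∫ x in ((n:ℝ)*α)..((n:ℝ)*α + (m:ℤ) • π), g x = (m:ℤ) • J := by
        rw [hper.intervalIntegral_add_zsmul_eq (m:ℤ) ((n:ℝ)*α) hint, hJdef,
          hper.intervalIntegral_add_eq ((n:ℝ)*α) 0, zero_add]
      have hnn : 0 ≤ ∫ x in ((n:ℝ)*α + (m:ℤ) • π)..((n:ℝ)*β), g x := by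
        apply intervalIntegral.integral_nonneg _ (fun u _ => h0 u)
        simpa using hle
      rw [hsplit, hper']
      simp only [zsmul_eq_mul, Int.cast_natCast] at hnn ⊢
      linarith
    have hI : I n = (n:ℝ)⁻¹ * ∫ x in ((n:ℝ)*α)..((n:ℝ)*β), g x := by
      rw [hIdef]
      simp only
      rw [← MeasureTheory.integral_Ioc_eq_integral_Ioo,
        ← intervalIntegral.integral_of_le hαβ.le,
        intervalIntegral.integral_comp_mul_left g hn', smul_eq_mul]
    rw [hI, hc₁def]
    calc (β - α) / (2 * π) * J = (n:ℝ)⁻¹ * (((n:ℝ) * (β - α)) / (2*π) * J) := by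
          field_simp
      _ ≤ (n:ℝ)⁻¹ * ((m:ℝ) * J) := by
          apply mul_le_mul_of_nonneg_left _ (by positivity)
          exact mul_le_mul_of_nonneg_right hm1 hJ.le
      _ ≤ (n:ℝ)⁻¹ * ∫ x in ((n:ℝ)*α)..((n:ℝ)*β), g x :=
          mul_le_mul_of_nonneg_left key (by positivity)
  set n₀ : ℕ := max 1 ⌈2 * π / (β - α)⌉₊ with hn₀def
  have hS : (Finset.Icc 1 n₀).Nonempty := ⟨1, by simp [hn₀def]⟩
  set c₂ : ℝ := (Finset.Icc 1 n₀).inf' hS I with hc₂def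
  refine ⟨min c₁ c₂, lt_min hc₁pos ?_, ?_⟩
  · rw [hc₂def, Finset.lt_inf'_iff]
    intro i hi
    exact hIpos i (Finset.mem_Icc.1 hi).1
  · intro n hn
    rcases le_or_gt n n₀ with h | h
    · exact le_trans (min_le_right _ _)
        (Finset.inf'_le I (Finset.mem_Icc.2 ⟨hn, h⟩))
    · refine le_trans (min_le_left _ _) (hlarge n ?_)
      have hceil : (⌈2 * π / (β - α)⌉₊ : ℝ) ≤ (n:ℝ) := by
        exact_mod_cast le_of_lt (lt_of_le_of_lt (le_max_right 1 _) h)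
      have := Nat.le_ceil (2 * π / (β - α))
      have h2 : 2 * π / (β - α) ≤ (n:ℝ) := le_trans this hceil
      rw [div_le_iff₀ (by linarith)] at h2
      linarith

/-! Auxiliary definitions for the main proof. -/

def gsp (M : ℕ) (j : Fin (M+2)) (t : ℝ) : ℝ :=
  if (j:ℕ) < M + 1 then
    Real.sin t ^ (2*(M+1)) * (if (j:ℕ) = 0 then Real.cos t ^ 2 else 1)
  else 1

lemma gsp_cont (M : ℕ) (j : Fin (M+2)) : Continuous (gsp M j) := by
  unfold gsp; split_ifs <;> fun_prop

lemma gsp_per (M : ℕ) (j : Fin (M+2)) : Function.Periodic (gsp M j) π := by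
  intro t
  unfold gsp
  split_ifs <;>
    simp [Real.sin_add_pi, Real.cos_add_pi, Even.neg_pow (even_two_mul (M+1)), neg_sq]

lemma gsp_nonneg (M : ℕ) (j : Fin (M+2)) (t : ℝ) : 0 ≤ gsp M j t := by
  unfold gsp
  split_ifs
  · exact mul_nonneg ((even_two_mul (M+1)).pow_nonneg _) (sq_nonneg _)
  · exact mul_nonneg ((even_two_mul (M+1)).pow_nonneg _) zero_le_one
  · exact zero_le_one

lemma gsp_countable (M : ℕ) (j : Fin (M+2)) : {t : ℝ | gsp M j t = 0}.Countable := by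
  have hsinZ : {t : ℝ | Real.sin t = 0}.Countable := by
    apply Set.Countable.mono _ (Set.countable_range (fun n : ℤ => (n:ℝ) * π))
    intro t ht
    obtain ⟨n, hn⟩ := Real.sin_eq_zero_iff.1 ht
    exact ⟨n, hn⟩
  have hcosZ : {t : ℝ | Real.cos t = 0}.Countable := by
    apply Set.Countable.mono _ (Set.countable_range (fun n : ℤ => (2*(n:ℝ)+1) * π / 2))
    intro t ht
    obtain ⟨n, hn⟩ := Real.cos_eq_zero_iff.1 ht
    exact ⟨n, by rw [hn]; (try push_cast); (try ring)⟩
  apply Set.Countable.mono _ (hsinZ.union hcosZ)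
  intro t ht
  simp only [Set.mem_setOf_eq, gsp] at ht
  split_ifs at ht with h1 h2
  · rcases mul_eq_zero.1 ht with h | h
    · exact Or.inl (pow_eq_zero_iff (by omega) |>.1 h)
    · exact Or.inr (pow_eq_zero_iff (by omega) |>.1 h)
  · rcases mul_eq_zero.1 ht with h | h
    · exact Or.inl (pow_eq_zero_iff (by omega) |>.1 h)
    · exact absurd h one_ne_zero
  · exact absurd ht one_ne_zero

theorem stmt13' (M : ℕ)
    (φ : Eu (M+2) → ℝ) (hφ : ContDiff ℝ (⊤ : ℕ∞) φ) (hφs : HasCompactSupport φ)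
    (hφ0 : ∀ x, 0 ≤ φ x)
    (hφsupp : tsupport φ ⊆ {x : Eu (M+2) | ∀ i, x i ∈ Set.Ioo 0 (2*π)})
    (Ω' : Set (Eu (M+2))) (hΩ'o : IsOpen Ω') (hΩ'ne : Ω'.Nonempty)
    (hΩ'sub : Ω' ⊆ {x : Eu (M+2) | ∀ i, x i ∈ Set.Ioo 0 (2*π)})
    (hφ1 : ∀ x ∈ Ω', φ x = 1) :
    ∃ c : ℝ, 0 < c ∧ ∀ n : ℕ, 1 ≤ n →
      c ≤ ∫ x : Eu (M+2),
          (x (Fin.last (M+1)))^M *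
          (∏ i : Fin (M+1), Real.sin ((n : ℝ) * x (Fin.castSucc i)))^(2*(M+1)) *
          (∑ j : Fin (M+1), (Real.cos ((n : ℝ) * x (Fin.castSucc j)))^2) *
          φ x := by
  have hπ := Real.pi_pos
  have hproj : ∀ i : Fin (M+2), Continuous fun x : Eu (M+2) => x i := by
    intro i
    exact (EuclideanSpace.proj (𝕜 := ℝ) i).continuous
  obtain ⟨z, hz⟩ := hΩ'ne
  obtain ⟨ε, hε, hball⟩ := Metric.isOpen_iff.1 hΩ'o z hz
  set li : Fin (M+2) := Fin.last (M+1) with hlidef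
  have hzlast : 0 < z li := (hΩ'sub hz li).1
  set r : ℝ := min (ε / (M+3)) (z li / 2) with hrdef
  have hrpos : 0 < r := lt_min (by positivity) (by positivity)
  have hr1 : r ≤ ε / (M+3) := min_le_left _ _
  have hr2 : r ≤ z li / 2 := min_le_right _ _
  set a : ℝ := z li - r with hadef
  have hapos : 0 < a := by rw [hadef]; linarith
  set B : Set (Eu (M+2)) := {x | ∀ i, x i ∈ Set.Ioo (z i - r) (z i + r)} with hBdef
  set K : Set (Eu (M+2)) := {x | ∀ i, x i ∈ Set.Icc (z i - r) (z i + r)} with hKdef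
  have hBK : B ⊆ K := fun x hx i => Set.Ioo_subset_Icc_self (hx i)
  have hKball : K ⊆ Metric.ball z ε := by
    intro x hx
    rw [Metric.mem_ball, EuclideanSpace.dist_eq]
    have hsum : ∑ i, dist (x i) (z i) ^ 2 ≤ ((M:ℝ)+2) * r^2 := by
      calc ∑ i, dist (x i) (z i) ^ 2 ≤ ∑ _i : Fin (M+2), r^2 := by
            apply Finset.sum_le_sum
            intro i _
            have h1 := (hx i).1
            have h2 := (hx i).2
            have habs : |x i - z i| ≤ r := abs_le.2 ⟨by linarith, by linarith⟩
            calc dist (x i) (z i) ^2 = |x i - z i|^2 := by rw [Real.dist_eq]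
              _ ≤ r ^ 2 := by nlinarith [abs_nonneg (x i - z i)]
        _ = ((M:ℝ)+2) * r^2 := by
            rw [Finset.sum_const, Finset.card_univ, Fintype.card_fin, nsmul_eq_mul]
            push_cast
            ring
    have hlt : ((M:ℝ)+2) * r^2 < ε ^ 2 := by
      have hM0 : (0:ℝ) ≤ M := Nat.cast_nonneg M
      have hr1' : r ≤ ε / ((M:ℝ)+3) := hr1
      have h3 : (0:ℝ) < (M:ℝ)+3 := by linarith
      have hre : r * ((M:ℝ)+3) ≤ ε := by
        rw [← le_div_iff₀ h3]; exact hr1'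
      have h4 : r * ((M:ℝ)+3) * (r * ((M:ℝ)+3)) ≤ ε * ε :=
        mul_le_mul hre hre (by positivity) (by linarith)
      nlinarith [mul_pos hrpos hrpos, hM0, h4]
    calc √(∑ i, dist (x i) (z i) ^ 2) ≤ √(((M:ℝ)+2) * r^2) := Real.sqrt_le_sqrt hsum
      _ < ε := (Real.sqrt_lt' hε).2 hlt
  have hBΩ : B ⊆ Ω' := fun x hx => hball (hKball (hBK hx))
  have hBopen : IsOpen B := by
    have hBeq : B = ⋂ i, (fun x : Eu (M+2) => x i) ⁻¹' Set.Ioo (z i - r) (z i + r) := by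
      ext x; simp [hBdef, Set.mem_iInter]
    rw [hBeq]
    exact isOpen_iInter_of_finite fun i => isOpen_Ioo.preimage (hproj i)
  have measB : MeasurableSet B := hBopen.measurableSet
  have hKcomp : IsCompact K := by
    apply Metric.isCompact_of_isClosed_isBounded
    · have hKeq : K = ⋂ i, (fun x : Eu (M+2) => x i) ⁻¹' Set.Icc (z i - r) (z i + r) := by
        ext x; simp [hKdef, Set.mem_iInter]
      rw [hKeq]
      exact isClosed_iInter fun i => isClosed_Icc.preimage (hproj i)
    · exact (Metric.isBounded_ball).subset hKball
  -- per-coordinate lower bounds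
  have hcoord : ∀ j : Fin (M+2), ∃ c : ℝ, 0 < c ∧ ∀ n : ℕ, 1 ≤ n →
      c ≤ ∫ t in Set.Ioo (z j - r) (z j + r), gsp M j ((n:ℝ) * t) :=
    fun j => oneD (by linarith) (gsp M j) (gsp_cont M j) (gsp_per M j)
      (gsp_nonneg M j) (gsp_countable M j)
  choose cc hcc1 hcc2 using hcoord
  refine ⟨a^M * ∏ j, cc j,
    mul_pos (pow_pos hapos M) (Finset.prod_pos fun j _ => hcc1 j), ?_⟩
  intro n hn
  -- abbreviations for this n
  set P : Eu (M+2) → ℝ :=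
    fun x => (∏ i : Fin (M+1), Real.sin ((n:ℝ) * x (Fin.castSucc i))) ^ (2*(M+1)) with hPdef
  set S : Eu (M+2) → ℝ :=
    fun x => ∑ j : Fin (M+1), Real.cos ((n:ℝ) * x (Fin.castSucc j)) ^ 2 with hSdef
  set F : Eu (M+2) → ℝ := fun x => x li ^ M * P x * S x with hFdef
  set G : Eu (M+2) → ℝ :=
    fun x => (∏ i : Fin (M+1), Real.sin ((n:ℝ) * x (Fin.castSucc i)) ^ (2*(M+1))) *
      Real.cos ((n:ℝ) * x (Fin.castSucc (0 : Fin (M+1)))) ^ 2 with hGdef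
  set h : Fin (M+2) → ℝ → ℝ :=
    fun j => (Set.Ioo (z j - r) (z j + r)).indicator (fun t => gsp M j ((n:ℝ) * t)) with hhdef
  have hPcont : Continuous P :=
    (continuous_finset_prod _ fun i _ =>
      Real.continuous_sin.comp (continuous_const.mul (hproj _))).pow _
  have hScont : Continuous S :=
    continuous_finset_sum _ fun j _ =>
      (Real.continuous_cos.comp (continuous_const.mul (hproj _))).pow 2
  have hFcont : Continuous F := (((hproj li).pow _).mul hPcont).mul hScont
  have hGcont : Continuous G :=
    (continuous_finset_prod _ fun i _ =>
      (Real.continuous_sin.comp (continuous_const.mul (hproj _))).pow _).mul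
      ((Real.continuous_cos.comp (continuous_const.mul (hproj _))).pow 2)
  have hP0 : ∀ x, 0 ≤ P x := fun x => (even_two_mul (M+1)).pow_nonneg _
  have hS0 : ∀ x, 0 ≤ S x := fun x => Finset.sum_nonneg fun j _ => sq_nonneg _
  have hFφ0 : ∀ x, 0 ≤ F x * φ x := by
    intro x
    rcases eq_or_ne (φ x) 0 with h0 | h0
    · simp [h0]
    · have hxs : x ∈ tsupport φ := subset_tsupport φ h0
      have hxpos : 0 < x li := (hφsupp hxs li).1
      exact mul_nonneg (mul_nonneg (mul_nonneg (pow_nonneg hxpos.le _) (hP0 x)) (hS0 x)) (hφ0 x)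
  have hFφint : Integrable (fun x => F x * φ x) :=
    (hFcont.mul hφ.continuous).integrable_of_hasCompactSupport hφs.mul_left
  have step1 : ∫ x in B, F x * φ x ≤ ∫ x, F x * φ x :=
    setIntegral_le_integral hFφint (ae_of_all _ hFφ0)
  have step2 : ∫ x in B, F x * φ x = ∫ x in B, F x :=
    setIntegral_congr_fun measB (fun x hx => by rw [hφ1 x (hBΩ hx), mul_one])
  have hFK : IntegrableOn F K := hFcont.continuousOn.integrableOn_compact hKcomp
  have hGK : IntegrableOn (fun x => a^M * G x) K :=
    (continuous_const.mul hGcont).continuousOn.integrableOn_compact hKcomp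
  have step3 : ∫ x in B, a^M * G x ≤ ∫ x in B, F x := by
    apply setIntegral_mono_on (hGK.mono_set hBK) (hFK.mono_set hBK) measB
    intro x hx
    have hxli : a ≤ x li := by
      have := (hx li).1
      rw [hadef]; linarith
    have hx0 : (0:ℝ) ≤ x li := le_trans hapos.le hxli
    have hcos : Real.cos ((n:ℝ) * x (Fin.castSucc (0 : Fin (M+1)))) ^ 2 ≤ S x :=
      Finset.single_le_sum (f := fun j : Fin (M+1) => Real.cos ((n:ℝ) * x (Fin.castSucc j)) ^ 2)
        (fun j _ => sq_nonneg _) (Finset.mem_univ (0 : Fin (M+1)))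
    have hprodpow : (∏ i : Fin (M+1), Real.sin ((n:ℝ) * x (Fin.castSucc i)) ^ (2*(M+1))) = P x :=
      Finset.prod_pow _ _ _
    calc a^M * G x
        = a^M * (P x * Real.cos ((n:ℝ) * x (Fin.castSucc (0 : Fin (M+1)))) ^ 2) := by
          rw [hGdef]; dsimp only; rw [hprodpow]
      _ ≤ x li ^ M * (P x * Real.cos ((n:ℝ) * x (Fin.castSucc (0 : Fin (M+1)))) ^ 2) :=
          mul_le_mul_of_nonneg_right (pow_le_pow_left₀ hapos.le hxli M)
            (mul_nonneg (hP0 x) (sq_nonneg _))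
      _ ≤ x li ^ M * (P x * S x) :=
          mul_le_mul_of_nonneg_left (mul_le_mul_of_nonneg_left hcos (hP0 x)) (pow_nonneg hx0 M)
      _ = F x := by rw [hFdef]; ring
  have hprodfun : ∀ x : Eu (M+2), B.indicator G x = ∏ j, h j (x j) := by
    intro x
    by_cases hx : x ∈ B
    · rw [Set.indicator_of_mem hx]
      have hx' : ∀ j : Fin (M+2), x j ∈ Set.Ioo (z j - r) (z j + r) := hx
      have hlast : h (Fin.last (M+1)) (x (Fin.last (M+1))) = 1 := by
        rw [hhdef]; dsimp only
        rw [Set.indicator_of_mem (hx' _)]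
        unfold gsp
        rw [if_neg (by simp)]
      have hstep : ∀ i : Fin (M+1), h (Fin.castSucc i) (x (Fin.castSucc i)) =
          Real.sin ((n:ℝ) * x (Fin.castSucc i)) ^ (2*(M+1)) *
            (if i = (0 : Fin (M+1)) then Real.cos ((n:ℝ) * x (Fin.castSucc i)) ^ 2 else 1) := by
        intro i
        rw [hhdef]; dsimp only
        rw [Set.indicator_of_mem (hx' _)]
        unfold gsp
        rw [if_pos (by simpa using i.isLt)]
        congr 1
        by_cases h0 : i = 0
        · subst h0; simp
        · rw [if_neg (fun h' => h0 (Fin.eq_of_val_eq (by simpa using h'))), if_neg h0]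
      symm
      rw [Fin.prod_univ_castSucc]
      rw [hlast, mul_one]
      rw [Finset.prod_congr rfl (fun i _ => hstep i)]
      rw [Finset.prod_mul_distrib,
        Finset.prod_ite_eq' Finset.univ (0 : Fin (M+1))
          (fun i => Real.cos ((n:ℝ) * x (Fin.castSucc i)) ^ 2),
        if_pos (Finset.mem_univ _)]
    · rw [Set.indicator_of_notMem hx]
      symm
      have : ∃ j, x j ∉ Set.Ioo (z j - r) (z j + r) := by
        by_contra hc
        push_neg at hc
        exact hx hc
      obtain ⟨j, hj⟩ := this
      apply Finset.prod_eq_zero (Finset.mem_univ j)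
      rw [hhdef]; dsimp only
      exact Set.indicator_of_notMem hj _
  have step4 : ∫ x in B, G x = ∏ j, ∫ t, h j t := by
    rw [← MeasureTheory.integral_indicator measB]
    calc ∫ x : Eu (M+2), B.indicator G x
        = ∫ x : Eu (M+2), ∏ j, h j (x j) := by simp only [hprodfun]
      _ = ∫ y : (Fin (M+2) → ℝ), ∏ j, h j (y j) :=
          (EuclideanSpace.volume_preserving_symm_measurableEquiv_toLp (Fin (M+2))).integral_comp'
            (fun y : Fin (M+2) → ℝ => ∏ j, h j (y j))
      _ = ∏ j, ∫ t, h j t :=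
          MeasureTheory.integral_fintype_prod_eq_prod (fun j t => h j t)
  have hfac : ∀ j, cc j ≤ ∫ t, h j t := by
    intro j
    rw [hhdef]; dsimp only
    rw [MeasureTheory.integral_indicator measurableSet_Ioo]
    exact hcc2 j n hn
  have step5 : ∏ j, cc j ≤ ∏ j, ∫ t, h j t :=
    Finset.prod_le_prod (fun j _ => (hcc1 j).le) (fun j _ => hfac j)
  calc a^M * ∏ j, cc j
      ≤ a^M * ∏ j, ∫ t, h j t :=
        mul_le_mul_of_nonneg_left step5 (pow_nonneg hapos.le M)
    _ = a^M * ∫ x in B, G x := by rw [step4]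
    _ = ∫ x in B, a^M * G x := (integral_const_mul _ _).symm
    _ ≤ ∫ x in B, F x := step3
    _ = ∫ x in B, F x * φ x := step2.symm
    _ ≤ ∫ x, F x * φ x := step1


/-- The main-term lower bound: there is `c > 0` such that for every `n ≥ 1`,
`∫ x_N^{N-2} (∏ sin(n xᵢ))^{2(N-1)} (Σ cos²(n x_j)) φ dx ≥ c`. -/
theorem stmt13 (N : ℕ) (hN : 3 ≤ N)
    (φ : Eu N → ℝ) (hφ : ContDiff ℝ (⊤ : ℕ∞) φ) (hφs : HasCompactSupport φ)
    (hφ0 : ∀ x, 0 ≤ φ x)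
    (hφsupp : tsupport φ ⊆ {x : Eu N | ∀ i, x i ∈ Set.Ioo 0 (2*π)})
    (Ω' : Set (Eu N)) (hΩ'o : IsOpen Ω') (hΩ'ne : Ω'.Nonempty)
    (hΩ'sub : Ω' ⊆ {x : Eu N | ∀ i, x i ∈ Set.Ioo 0 (2*π)})
    (hφ1 : ∀ x ∈ Ω', φ x = 1) :
    ∃ c : ℝ, 0 < c ∧ ∀ n : ℕ, 1 ≤ n →
      c ≤ ∫ x : Eu N,
          (x (lastIdx N (by omega)))^(N-2) *
          (∏ i : Fin (N-1), Real.sin ((n : ℝ) * x (Fin.castLE (Nat.sub_le N 1) i)))^(2*(N-1)) *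
          (∑ j : Fin (N-1), (Real.cos ((n : ℝ) * x (Fin.castLE (Nat.sub_le N 1) j)))^2) *
          φ x := by
  obtain ⟨M, rfl⟩ : ∃ M, N = M + 2 := ⟨N - 2, by omega⟩
  exact stmt13' M φ hφ hφs hφ0 hφsupp Ω' hΩ'o hΩ'ne hΩ'sub hφ1
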